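/- Combined safe and live vertical refinement is transitive: given transition systems A, C, D with admissible trace sets 𝐀 ⊆ Tr(A), 𝐂 ⊆ Tr(C), 𝐃 ⊆ Tr(D), and maps F : C → A and G : D → C, if (A,𝐀) ⊑_F (C,𝐂) and (C,𝐂) ⊑_G (D,𝐃), where ⊑ denotes the conjunction of safe vertical refinement and live vertical refinement, then (A,𝐀) ⊑_{F∘G} (D,𝐃). -/
import Mathlib


/-- A (finite) trace of a transition system with reaction relation `r` is a
nonempty list whose consecutive elements are related by `r`. -/
def IsTrace {A : Type*} (r : A → A → Prop) (t : List A) : Prop :=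
  t ≠ [] ∧ t.Chain' r

/-- `Tr(A)`: the set of all traces of the transition system `(A, r)`. -/
def Traces {A : Type*} (r : A → A → Prop) : Set (List A) :=
  {t | IsTrace r t}

/-- Safe vertical refinement `A ⊑ˢᵃᶠᵉ_F C`: the pointwise `F`-image of every
trace of `C` is a trace of `A`, i.e. `F(Tr(C)) ⊆ Tr(A)`. -/
def SafeRef {C A : Type*} (rC : C → C → Prop) (rA : A → A → Prop) (F : C → A) : Prop :=
  (List.map F) '' Traces rC ⊆ Traces rA

/-- Live vertical refinement `(A,𝐀) ⊑ˡⁱᵛᵉ_F (C,𝐂)`: for every trace `s` of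
`C`, whenever `F(s)` has an extension `t'` (a nonempty list such that the
composite `F(s);t'` is a trace) with the composite `F(s);t'` admissible
(in `𝐀`), then `s` has an extension `s'` whose composite `s;s'` is an
admissible trace (in `𝐂`) and `F(s') = t'`. -/
def LiveRef {C A : Type*} (rC : C → C → Prop) (rA : A → A → Prop) (F : C → A)
    (AdmA : Set (List A)) (AdmC : Set (List C)) : Prop :=
  ∀ s ∈ Traces rC, ∀ t' : List A,
    t' ≠ [] → IsTrace rA (s.map F ++ t') → (s.map F ++ t') ∈ AdmA →
    ∃ s' : List C, s' ≠ [] ∧ IsTrace rC (s ++ s') ∧ (s ++ s') ∈ AdmC ∧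
      s'.map F = t'

/-- Combined safe and live vertical refinement
`(A,𝐀) ⊑_F (C,𝐂)`: the conjunction of safe and live vertical refinement. -/
def SafeLiveRef {C A : Type*} (rC : C → C → Prop) (rA : A → A → Prop) (F : C → A)
    (AdmA : Set (List A)) (AdmC : Set (List C)) : Prop :=
  SafeRef rC rA F ∧ LiveRef rC rA F AdmA AdmC

/-- Combined safe and live vertical refinement is transitive. -/
theorem safeLiveRef_trans {A C D : Type*}
    (rA : A → A → Prop) (rC : C → C → Prop) (rD : D → D → Prop)
    (F : C → A) (G : D → C)
    (AdmA : Set (List A)) (AdmC : Set (List C)) (AdmD : Set (List D))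
    (hA : AdmA ⊆ Traces rA) (hC : AdmC ⊆ Traces rC) (hD : AdmD ⊆ Traces rD)
    (hFC : SafeLiveRef rC rA F AdmA AdmC) (hGD : SafeLiveRef rD rC G AdmC AdmD) :
    SafeLiveRef rD rA (F ∘ G) AdmA AdmD := by
  obtain ⟨hFsafe, hFlive⟩ := hFC
  obtain ⟨hGsafe, hGlive⟩ := hGD
  constructor
  · rintro t ⟨s, hs, rfl⟩
    have : s.map (F ∘ G) = (s.map G).map F := by simp
    rw [this]
    exact hFsafe ⟨s.map G, hGsafe ⟨s, hs, rfl⟩, rfl⟩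
  · intro s hs t' ht' htr hadm
    have hmapGC : s.map G ∈ Traces rC := hGsafe ⟨s, hs, rfl⟩
    have heq : s.map (F ∘ G) = (s.map G).map F := by simp
    rw [heq] at htr hadm
    obtain ⟨s'', hne'', htr'', hadm'', hmap''⟩ :=
      hFlive (s.map G) hmapGC t' ht' htr hadm
    obtain ⟨s', hne', htr', hadm', hmap'⟩ :=
      hGlive s hs s'' hne'' htr'' hadm''
    exact ⟨s', hne', htr', hadm', by simp [← hmap'', ← hmap']⟩
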